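/- Let η, η¹, I, O be finite Borel measures on P(ℝ^d) with η = η¹ + I + O, where I is concentrated on U₁^c ∩ V and O has ‖O‖ ≤ ‖I‖ ≤ (2/9)κ, and suppose ξ̃ is a symmetric measure on P(ℝ^d)² with marginals ≥ the relevant pieces such that ξ̃(U₃ × U₃) ≥ (5/9)κ. Then the measure ξ'' defined by ξ'' = [ (ξ̃ | V×V) − (‖ζ‖/‖η³‖)(ξ̃ | U₃×U₃) ] + (1/‖I‖)[(O|U₂)×I + I×(O|U₂)] + (1/‖η³‖)[ζ×η³ + η³×ζ], with η³ the marginal of (ξ̃ | U₃×U₃) and ζ = (1 − ‖O|U₂‖/‖I‖)·I + (O|U₂^c), is a positive symmetric measure whose marginals on either coordinate equal η restricted to V (i.e., ξ'' is a symmetric self-coupling of η|V), provided ‖ζ‖ ≤ ‖η³‖ and η¹ is the marginal of ξ̃|V×V. -/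

import Mathlib

open MeasureTheory
open scoped ENNReal

noncomputable section

private lemma meas_add_right_cancel {α : Type*} [MeasurableSpace α]
    {μ₁ μ₂ ν : Measure α} (hν : ν Set.univ ≠ ∞) (h : μ₁ + ν = μ₂ + ν) : μ₁ = μ₂ := by
  ext s hs
  have hb : ν s ≠ ∞ := ne_top_of_le_ne_top hν (measure_mono (Set.subset_univ s))
  have h1 : μ₁ s + ν s = μ₂ s + ν s := by
    have := congrArg (fun m : Measure α => m s) h
    simpa using this
  exact WithTop.add_right_cancel hb h1

private lemma restrict_of_null_compl {α : Type*} [MeasurableSpace α]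
    (μ : Measure α) (s : Set α) (h : μ sᶜ = 0) : μ.restrict s = μ :=
  Measure.restrict_eq_self_of_ae_mem (by rw [ae_iff]; exact h)

theorem corrected_coupling_is_self_coupling {Y : Type*} [MeasurableSpace Y]
    (U₁ U₂ U₃ V : Set Y)
    (h32 : U₃ ⊆ U₂) (h21 : U₂ ⊆ U₁) (h1V : U₁ ⊆ V)
    (hU₁ : MeasurableSet U₁) (hU₂ : MeasurableSet U₂) (hU₃ : MeasurableSet U₃)
    (hV : MeasurableSet V)
    (κ : ℝ≥0∞) (hκ : 0 < κ) (hκfin : κ ≠ ∞)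
    (η η₁ I O : Measure Y)
    [IsFiniteMeasure η] [IsFiniteMeasure η₁] [IsFiniteMeasure I] [IsFiniteMeasure O]
    (hdecomp : η = η₁ + I + O)
    (hIconc : I ((U₁ᶜ ∩ V)ᶜ) = 0)
    (hOconc : O Vᶜ = 0)
    (hOI : O Set.univ ≤ I Set.univ) (hIκ : I Set.univ ≤ 2 / 9 * κ)
    (hIpos : 0 < I Set.univ)
    (ξt : Measure (Y × Y)) [IsFiniteMeasure ξt]
    (hsymm : ξt.map Prod.swap = ξt)
    (hξ3 : 5 / 9 * κ ≤ ξt (U₃ ×ˢ U₃))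
    (hη₁ : η₁ = (ξt.restrict (V ×ˢ V)).map Prod.fst)
    (η₃ : Measure Y) (hη₃ : η₃ = (ξt.restrict (U₃ ×ˢ U₃)).map Prod.fst)
    (ζ : Measure Y)
    (hζdef : ζ = (1 - O U₂ / I Set.univ) • I + O.restrict U₂ᶜ)
    (hζη₃ : ζ Set.univ ≤ η₃ Set.univ)
    (ξ'' : Measure (Y × Y))
    (hξ'' : ξ'' = (ξt.restrict (V ×ˢ V) - (ζ Set.univ / η₃ Set.univ) • ξt.restrict (U₃ ×ˢ U₃))
      + (I Set.univ)⁻¹ • ((O.restrict U₂).prod I + I.prod (O.restrict U₂))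
      + (η₃ Set.univ)⁻¹ • (ζ.prod η₃ + η₃.prod ζ)) :
    ξ''.map Prod.swap = ξ'' ∧
      ξ''.map Prod.fst = η.restrict V ∧ ξ''.map Prod.snd = η.restrict V := by
  set c : ℝ≥0∞ := ζ Set.univ / η₃ Set.univ with hc
  set R : Measure (Y × Y) := ξt.restrict (U₃ ×ˢ U₃) with hR
  set A : Measure (Y × Y) := ξt.restrict (V ×ˢ V) with hA
  have hU3V : (U₃ ×ˢ U₃ : Set (Y × Y)) ⊆ V ×ˢ V :=
    Set.prod_mono (h32.trans (h21.trans h1V)) (h32.trans (h21.trans h1V))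
  have hRA : R ≤ A := Measure.restrict_mono hU3V le_rfl
  -- basic facts about η₃
  have hη₃u : η₃ Set.univ = ξt (U₃ ×ˢ U₃) := by
    rw [hη₃, Measure.map_apply measurable_fst MeasurableSet.univ, Set.preimage_univ,
      Measure.restrict_apply_univ]
  have hη₃pos : η₃ Set.univ ≠ 0 := by
    rw [hη₃u]
    intro h0
    have h59 : (0 : ℝ≥0∞) < 5 / 9 * κ := by
      refine ENNReal.mul_pos ?_ hκ.ne'
      simp [ENNReal.div_eq_zero_iff]
    exact absurd (hξ3.trans_eq h0) (not_le.mpr h59)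
  have hη₃fin : η₃ Set.univ ≠ ∞ := by rw [hη₃u]; exact measure_ne_top _ _
  haveI : IsFiniteMeasure η₃ := ⟨lt_top_iff_ne_top.2 hη₃fin⟩
  haveI : IsFiniteMeasure ζ := ⟨lt_of_le_of_lt hζη₃ (lt_top_iff_ne_top.2 hη₃fin)⟩
  have hc1 : c ≤ 1 := by
    rw [hc]
    calc ζ Set.univ / η₃ Set.univ ≤ η₃ Set.univ / η₃ Set.univ :=
          ENNReal.div_le_div_right hζη₃ _
      _ = 1 := ENNReal.div_self hη₃pos hη₃fin
  have hle : c • R ≤ A := by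
    refine le_trans ?_ hRA
    refine Measure.le_iff.2 fun s hs => ?_
    rw [Measure.smul_apply, smul_eq_mul]
    calc c * R s ≤ 1 * R s := mul_le_mul_left hc1 _
      _ = R s := one_mul _
  have hcRfin : (c • R) Set.univ ≠ ∞ := by
    have : (c • R) Set.univ ≤ R Set.univ := by
      rw [Measure.smul_apply, smul_eq_mul]
      calc c * R Set.univ ≤ 1 * R Set.univ := mul_le_mul_left hc1 _
        _ = R Set.univ := one_mul _
    exact ne_top_of_le_ne_top (measure_ne_top R _) this
  haveI : IsFiniteMeasure (c • R) := ⟨lt_top_iff_ne_top.2 hcRfin⟩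
  have key : (A - c • R) + c • R = A := Measure.sub_add_cancel_of_le hle
  -- swap invariance of R and A
  have hswap_restrict : ∀ (S : Set Y), MeasurableSet S →
      (ξt.restrict (S ×ˢ S)).map Prod.swap = ξt.restrict (S ×ˢ S) := by
    intro S hS
    have := Measure.restrict_map (μ := ξt) measurable_swap (hS.prod hS)
    rw [hsymm, Set.preimage_swap_prod] at this
    exact this.symm
  have hswapR : R.map Prod.swap = R := hswap_restrict U₃ hU₃
  have hswapA : A.map Prod.swap = A := hswap_restrict V hV
  have hswapD : (A - c • R).map Prod.swap = A - c • R := by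
    refine meas_add_right_cancel hcRfin ?_
    have h1 : ((A - c • R) + c • R).map Prod.swap = A := by rw [key, hswapA]
    rw [Measure.map_add _ _ measurable_swap, Measure.map_smul, hswapR] at h1
    rw [key]; exact h1
  -- first-coordinate marginal of the subtraction part
  have hmfD : (A - c • R).map Prod.fst + c • η₃ = η₁ := by
    have h1 := congrArg (fun m : Measure (Y × Y) => m.map Prod.fst) key
    rw [Measure.map_add _ _ measurable_fst, Measure.map_smul] at h1
    rw [← hη₃] at h1
    rw [h1, hη₁]
  -- concentration facts
  have hIV : I.restrict V = I := by
    refine restrict_of_null_compl _ _ ?_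
    refine le_antisymm (le_trans (measure_mono ?_) hIconc.le) zero_le
    intro x hx
    simp only [Set.mem_compl_iff, Set.mem_inter_iff, not_and] at *
    exact fun _ => hx
  have hOV : O.restrict V = O := restrict_of_null_compl _ _ hOconc
  have hη₁V : η₁.restrict V = η₁ := by
    refine restrict_of_null_compl _ _ ?_
    rw [hη₁, Measure.map_apply measurable_fst hV.compl,
      Measure.restrict_apply (measurable_fst hV.compl)]
    convert measure_empty (μ := ξt)
    ext ⟨x, y⟩
    simp only [Set.mem_inter_iff, Set.mem_preimage, Set.mem_compl_iff, Set.mem_prod,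
      Set.mem_empty_iff_false, iff_false, not_and]
    tauto
  have hrestr : η.restrict V = η₁ + I + O := by
    rw [hdecomp, Measure.restrict_add, Measure.restrict_add, hIV, hOV, hη₁V]
  -- coefficient facts
  have hIfin : I Set.univ ≠ ∞ := measure_ne_top _ _
  have haux : O U₂ / I Set.univ + (1 - O U₂ / I Set.univ) = 1 := by
    refine add_tsub_cancel_of_le ?_
    calc O U₂ / I Set.univ ≤ I Set.univ / I Set.univ :=
          ENNReal.div_le_div_right (le_trans (measure_mono (Set.subset_univ _)) hOI) _
      _ = 1 := ENNReal.div_self hIpos.ne' hIfin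
  -- compute the fst marginal
  have hfst : ξ''.map Prod.fst = η.restrict V := by
    rw [hξ'']
    rw [Measure.map_add _ _ measurable_fst, Measure.map_add _ _ measurable_fst,
      Measure.map_smul, Measure.map_smul,
      Measure.map_add _ _ measurable_fst, Measure.map_add _ _ measurable_fst,
      Measure.map_fst_prod, Measure.map_fst_prod, Measure.map_fst_prod, Measure.map_fst_prod,
      Measure.restrict_apply_univ]
    rw [smul_add, smul_add, smul_smul, smul_smul, smul_smul, smul_smul]
    rw [ENNReal.inv_mul_cancel hIpos.ne' hIfin, ENNReal.inv_mul_cancel hη₃pos hη₃fin,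
      one_smul, one_smul]
    have hcoef1 : (I Set.univ)⁻¹ * O U₂ = O U₂ / I Set.univ := by
      rw [ENNReal.div_eq_inv_mul]
    have hcoef2 : (η₃ Set.univ)⁻¹ * ζ Set.univ = c := by
      rw [hc, ENNReal.div_eq_inv_mul]
    rw [hcoef1, hcoef2, hrestr]
    calc (A - c • R).map Prod.fst + (O.restrict U₂ + (O U₂ / I Set.univ) • I) + (ζ + c • η₃)
        = ((A - c • R).map Prod.fst + c • η₃)
          + (((O U₂ / I Set.univ) • I + ζ) + O.restrict U₂) := by abel
      _ = η₁ + (((O U₂ / I Set.univ) • I + (1 - O U₂ / I Set.univ) • I + O.restrict U₂ᶜ)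
          + O.restrict U₂) := by rw [hmfD, hζdef]; abel
      _ = η₁ + (I + (O.restrict U₂ + O.restrict U₂ᶜ)) := by
          rw [← add_smul, haux, one_smul]; abel
      _ = η₁ + (I + O) := by rw [Measure.restrict_add_restrict_compl hU₂]
      _ = η₁ + I + O := by rw [add_assoc]
  -- symmetry
  have hswap : ξ''.map Prod.swap = ξ'' := by
    rw [hξ'']
    rw [Measure.map_add _ _ measurable_swap, Measure.map_add _ _ measurable_swap,
      Measure.map_smul, Measure.map_smul,
      Measure.map_add _ _ measurable_swap, Measure.map_add _ _ measurable_swap,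
      Measure.prod_swap, Measure.prod_swap, Measure.prod_swap, Measure.prod_swap, hswapD]
    congr 1
    · congr 1
      rw [add_comm]
    · rw [add_comm]
  refine ⟨hswap, hfst, ?_⟩
  have : ξ''.map Prod.snd = (ξ''.map Prod.swap).map Prod.fst := by
    rw [Measure.map_map measurable_fst measurable_swap]
    rfl
  rw [this, hswap, hfst]
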